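/- There exists a two-element label poset failing the lifting theorem beyond totally ordered labels: take labels in {0,1}² with the product order, B a singleton, A = {1,2}, μ the uniform measure on the two configurations ((1,0),(0,0)) and ((0,0),(0,1)) of ({0,1}²)^A, and ρ the uniform measure on ((1,0),(0,1)) and ((0,1),(1,0)). Then μ is not stochastically dominated by ρ, even though every single configuration in the support of μ is coordinatewise below some configuration in the support of ρ. -/
import Mathlib


open MeasureTheory ProbabilityTheory

/-- `μ` is stochastically dominated by `ν`. -/
def StochDom {E : Type*} [MeasurableSpace E] [Preorder E] (μ ν : Measure E) : Prop :=
  ∃ κ : Measure (E × E), IsProbabilityMeasure κ ∧ κ.map Prod.fst = μ ∧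
    κ.map Prod.snd = ν ∧ κ {q | q.1 ≤ q.2} = 1

/-- Configurations: labels in `{0,1}²` (product order) on the two-element set `A`. -/
abbrev Config12 := Fin 2 → Bool × Bool

/-- The configuration `((1,0),(0,0))`. -/
def c₁ : Config12 := fun i => if i = 0 then (true, false) else (false, false)
/-- The configuration `((0,0),(0,1))`. -/
def c₂ : Config12 := fun i => if i = 0 then (false, false) else (false, true)
/-- The configuration `((1,0),(0,1))`. -/
def d₁ : Config12 := fun i => if i = 0 then (true, false) else (false, true)
/-- The configuration `((0,1),(1,0))`. -/
def d₂ : Config12 := fun i => if i = 0 then (false, true) else (true, false)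

noncomputable def μ12 : Measure Config12 :=
  (2 : ENNReal)⁻¹ • (Measure.dirac c₁ + Measure.dirac c₂)

noncomputable def ρ12 : Measure Config12 :=
  (2 : ENNReal)⁻¹ • (Measure.dirac d₁ + Measure.dirac d₂)

lemma hc1d1 : c₁ ≤ d₁ := by intro i; fin_cases i <;> simp [c₁, d₁]
lemma hc2d1 : c₂ ≤ d₁ := by intro i; fin_cases i <;> simp [c₂, d₁]
lemma hc1d2 : ¬ c₁ ≤ d₂ := by
  intro h; exact (by decide : ¬ (true : Bool) ≤ false) (h 0).1
lemma hc2d2 : ¬ c₂ ≤ d₂ := by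
  intro h; exact (by decide : ¬ (true : Bool) ≤ false) (h 1).2
lemma hd12 : d₁ ≠ d₂ := by intro h; have := congrFun h 0; simp [d₁, d₂] at this

/-- **Counterexample with non-totally-ordered labels:** every atom of `μ12` lies below
some atom of `ρ12`, yet `μ12` is not stochastically dominated by `ρ12`. -/
theorem stmt12 :
    (c₁ ≤ d₁ ∨ c₁ ≤ d₂) ∧ (c₂ ≤ d₁ ∨ c₂ ≤ d₂) ∧ ¬ StochDom μ12 ρ12 := by
  refine ⟨Or.inl hc1d1, Or.inl hc2d1, ?_⟩
  rintro ⟨κ, hκ, hfst, hsnd, hle⟩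
  have hmeas : ∀ s : Set (Config12 × Config12), MeasurableSet s := fun s =>
    s.to_countable.measurableSet
  have hmeasE : ∀ s : Set Config12, MeasurableSet s := fun s => s.to_countable.measurableSet
  have h0 : κ {q : Config12 × Config12 | q.1 ≤ q.2}ᶜ = 0 := by
    have := measure_add_measure_compl (μ := κ) (hmeas {q : Config12 × Config12 | q.1 ≤ q.2})
    rw [hle, hκ.measure_univ] at this
    exact (ENNReal.add_right_inj ENNReal.one_ne_top).mp (by rw [this, add_zero])
  have hfst0 : κ (Prod.fst ⁻¹' ({c₁, c₂} : Set Config12)ᶜ) = 0 := by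
    have := Measure.map_apply (μ := κ) measurable_fst (hmeasE ({c₁, c₂}ᶜ))
    rw [hfst] at this
    rw [← this]
    simp [μ12, Measure.dirac_apply]
  have hsnd2 : κ (Prod.snd ⁻¹' ({d₂} : Set Config12)) = 2⁻¹ := by
    have := Measure.map_apply (μ := κ) measurable_snd (hmeasE {d₂})
    rw [hsnd] at this
    rw [← this]
    simp only [ρ12, Measure.smul_apply, Measure.add_apply, Measure.dirac_apply,
      Set.indicator_apply, Set.mem_singleton_iff, hd12, if_false, if_true, Pi.one_apply]
    simp [hd12]
  have hsub : Prod.snd ⁻¹' ({d₂} : Set Config12) ⊆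
      {q : Config12 × Config12 | q.1 ≤ q.2}ᶜ ∪ Prod.fst ⁻¹' ({c₁, c₂} : Set Config12)ᶜ := by
    rintro ⟨x, y⟩ hq
    simp only [Set.mem_preimage, Set.mem_singleton_iff] at hq
    subst hq
    by_cases h : x ∈ ({c₁, c₂} : Set Config12)
    · left
      intro hle'
      rcases h with rfl | rfl
      · exact hc1d2 hle'
      · exact hc2d2 hle'
    · exact Or.inr h
  have : κ (Prod.snd ⁻¹' ({d₂} : Set Config12)) ≤ 0 := by
    calc κ (Prod.snd ⁻¹' ({d₂} : Set Config12)) ≤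
        κ ({q : Config12 × Config12 | q.1 ≤ q.2}ᶜ ∪ Prod.fst ⁻¹' ({c₁, c₂} : Set Config12)ᶜ) :=
          measure_mono hsub
      _ ≤ _ + _ := measure_union_le _ _
      _ = 0 := by rw [h0, hfst0, add_zero]
  rw [hsnd2] at this
  simp at this
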